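/- Fix all coefficient blocks except (β_{jk}, β_{kj}) for a given pair j ≠ k. Define the partial residuals r_{jk} = x_j − Σ_{l≠j,k} Ψ_{jl} β_{jl} and r_{kj} = x_k − Σ_{l≠k,j} Ψ_{kl} β_{kl}, and the least-squares fits b_{jk} = (Ψ_{jk}ᵀΨ_{jk})^{-1} Ψ_{jk}ᵀ r_{jk} and b_{kj} = (Ψ_{kj}ᵀΨ_{kj})^{-1} Ψ_{kj}ᵀ r_{kj}. If (b_{jk}, b_{kj}) ≠ (0,0), then the unique minimizer of F over (β_{jk}, β_{kj}) with all other blocks held fixed is given by the group soft-thresholding update β̂_{jk} = (1 − nλ / (‖Ψ_{jk} b_{jk}‖₂² + ‖Ψ_{kj} b_{kj}‖₂²)^{1/2})_+ · b_{jk} and β̂_{kj} = (1 − nλ / (‖Ψ_{jk} b_{jk}‖₂² + ‖Ψ_{kj} b_{kj}‖₂²)^{1/2})_+ · b_{kj}, where (u)_+ = max(u, 0); if (b_{jk}, b_{kj}) = (0,0), the unique minimizer is (0,0). -/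

import Mathlib

open Matrix
open scoped Classical

/-- Squared Euclidean norm ‖v‖₂² of a vector in ℝ^n. -/
noncomputable def sqNorm {n : ℕ} (v : Fin n → ℝ) : ℝ := ∑ i, v i ^ 2

/-- The SpaCE JAM objective
F(β) = (1/(2n)) Σ_j ‖x_j − Σ_{k≠j} Ψ_{jk}β_{jk}‖₂²
       + λ Σ_{k>j} (‖Ψ_{jk}β_{jk}‖₂² + ‖Ψ_{kj}β_{kj}‖₂²)^{1/2}. -/
noncomputable def spaceJamObj (n r d : ℕ) (lam : ℝ)
    (x : Fin d → Fin n → ℝ)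
    (Ψ : Fin d → Fin d → Matrix (Fin n) (Fin r) ℝ)
    (β : Fin d → Fin d → Fin r → ℝ) : ℝ :=
  (1 / (2 * (n : ℝ))) * ∑ j, sqNorm (fun i =>
      x j i - ∑ k ∈ Finset.univ.filter (fun k => k ≠ j), (Ψ j k).mulVec (β j k) i)
  + lam * ∑ p ∈ Finset.univ.filter (fun p : Fin d × Fin d => p.1 < p.2),
      Real.sqrt (sqNorm ((Ψ p.1 p.2).mulVec (β p.1 p.2))
        + sqNorm ((Ψ p.2 p.1).mulVec (β p.2 p.1)))

/-- Replace the blocks (j,k) and (k,j) of β by u and v respectively. -/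
def updPair {r d : ℕ} (β : Fin d → Fin d → Fin r → ℝ) (j k : Fin d)
    (u v : Fin r → ℝ) : Fin d → Fin d → Fin r → ℝ :=
  fun a b => if a = j ∧ b = k then u else if a = k ∧ b = j then v else β a b

open scoped RealInnerProductSpace



lemma sj_key {E : Type*} [NormedAddCommGroup E] [InnerProductSpace ℝ E]
    (b : E) (μ c : ℝ) (hμ : 0 < μ) (hc : c = max (1 - μ / ‖b‖) 0) (w : E) :
    ((1/2) * ‖c • b‖^2 - ⟪b, c • b⟫ + μ * ‖c • b‖
      ≤ (1/2) * ‖w‖^2 - ⟪b, w⟫ + μ * ‖w‖)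
    ∧ ((1/2) * ‖w‖^2 - ⟪b, w⟫ + μ * ‖w‖
      ≤ (1/2) * ‖c • b‖^2 - ⟪b, c • b⟫ + μ * ‖c • b‖ → w = c • b) := by
  have hW0 : (0:ℝ) ≤ ‖w‖ := norm_nonneg w
  have hD : ⟪b, w⟫ ≤ ‖b‖ * ‖w‖ := real_inner_le_norm b w
  by_cases hb : b = 0
  · subst hb
    simp only [smul_zero, norm_zero, inner_zero_left, mul_zero, sub_zero, add_zero]
    constructor
    · nlinarith [sq_nonneg ‖w‖]
    · intro h
      have : ‖w‖ = 0 := by nlinarith [sq_nonneg ‖w‖]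
      simpa [norm_eq_zero] using this
  · have hB : 0 < ‖b‖ := norm_pos_iff.mpr hb
    by_cases hbig : ‖b‖ ≤ μ
    · have hc0 : c = 0 := by
        rw [hc, max_eq_right]
        rw [sub_nonpos]
        rw [le_div_iff₀ hB]
        linarith
      subst hc0
      simp only [zero_smul, norm_zero, inner_zero_right, mul_zero, sub_zero, add_zero,
        zero_pow, zero_mul]
      have h1 : (1/2) * ‖w‖^2 - ⟪b, w⟫ + μ * ‖w‖
          ≥ (1/2)*‖w‖^2 + (μ - ‖b‖) * ‖w‖ := by nlinarith
      constructor
      · nlinarith [sq_nonneg ‖w‖]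
      · intro h
        have hw : ‖w‖ = 0 := by nlinarith [sq_nonneg ‖w‖]
        simpa [norm_eq_zero] using hw
    · push_neg at hbig
      have hcpos : 0 < 1 - μ / ‖b‖ := by
        rw [sub_pos, div_lt_one hB]; exact hbig
      have hcv : c = 1 - μ / ‖b‖ := by rw [hc, max_eq_left hcpos.le]
      have hcB : c * ‖b‖ = ‖b‖ - μ := by
        rw [hcv]; field_simp
      have hnorm_cb : ‖c • b‖ = ‖b‖ - μ := by
        rw [norm_smul, Real.norm_eq_abs, abs_of_pos (hcv ▸ hcpos), hcB]
      have hinner_cb : ⟪b, c • b⟫ = c * ‖b‖^2 := by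
        rw [real_inner_smul_right, real_inner_self_eq_norm_sq]
      have hval : (1/2) * ‖c • b‖^2 - ⟪b, c • b⟫ + μ * ‖c • b‖
          = -(1/2) * (‖b‖ - μ)^2 := by
        rw [hnorm_cb, hinner_cb]
        have : c * ‖b‖^2 = (‖b‖ - μ) * ‖b‖ := by rw [pow_two, ← mul_assoc, hcB]
        rw [this]; ring
      rw [hval]
      constructor
      · nlinarith [sq_nonneg (‖w‖ - (‖b‖ - μ))]
      · intro h
        have hid : (1/2)*(‖w‖ - (‖b‖ - μ))^2 + (‖b‖*‖w‖ - ⟪b, w⟫)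
            = ((1/2) * ‖w‖^2 - ⟪b, w⟫ + μ * ‖w‖) + (1/2) * (‖b‖ - μ)^2 := by ring
        have h1 : (1/2)*(‖w‖ - (‖b‖ - μ))^2 + (‖b‖*‖w‖ - ⟪b, w⟫) ≤ 0 := by
          rw [hid]; linarith
        have hsq : (‖w‖ - (‖b‖ - μ))^2 = 0 := by
          nlinarith [sq_nonneg (‖w‖ - (‖b‖ - μ))]
        have h2 : ‖w‖ = ‖b‖ - μ := by
          have := pow_eq_zero_iff (n := 2) (by norm_num) |>.mp hsq
          linarith
        have h3 : ⟪b, w⟫ = ‖b‖ * ‖w‖ := by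
          rw [hsq] at h1; linarith
        have h4 : ‖w‖ • b = ‖b‖ • w := inner_eq_norm_mul_iff_real.mp h3
        have : w = (‖w‖ / ‖b‖) • b := by
          have h5 := congrArg (fun z => (‖b‖)⁻¹ • z) h4
          simp only [smul_smul, inv_mul_cancel₀ hB.ne', one_smul] at h5
          rw [div_eq_inv_mul]; exact h5.symm
        rw [this, h2, hcv]
        congr 1
        field_simp




lemma sqNorm_eq_dot {n : ℕ} (v : Fin n → ℝ) : sqNorm v = v ⬝ᵥ v := by
  simp [sqNorm, dotProduct, pow_two]

lemma sqNorm_sub {n : ℕ} (a b : Fin n → ℝ) :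
    sqNorm (fun i => a i - b i) = sqNorm a - 2 * (a ⬝ᵥ b) + sqNorm b := by
  have : (fun i => a i - b i) = a - b := rfl
  rw [this, sqNorm_eq_dot, sqNorm_eq_dot, sqNorm_eq_dot, sub_dotProduct,
    dotProduct_sub, dotProduct_sub, dotProduct_comm b a]
  ring

noncomputable def emb {r : ℕ} (u v : Fin r → ℝ) : EuclideanSpace ℝ (Fin r ⊕ Fin r) :=
  (WithLp.equiv 2 _).symm (Sum.elim u v)

lemma emb_normsq {r : ℕ} (u v : Fin r → ℝ) : ‖emb u v‖ ^ 2 = sqNorm u + sqNorm v := by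
  rw [EuclideanSpace.norm_eq, Real.sq_sqrt (by positivity)]
  simp [emb, Fintype.sum_sum_type, sqNorm, sq_abs]

lemma sqNorm_nonneg {n : ℕ} (v : Fin n → ℝ) : 0 ≤ sqNorm v := by
  unfold sqNorm; positivity

lemma emb_norm {r : ℕ} (u v : Fin r → ℝ) :
    ‖emb u v‖ = Real.sqrt (sqNorm u + sqNorm v) := by
  rw [← emb_normsq, Real.sqrt_sq (norm_nonneg _)]

lemma emb_inner {r : ℕ} (a b u v : Fin r → ℝ) :
    ⟪emb a b, emb u v⟫ = a ⬝ᵥ u + b ⬝ᵥ v := by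
  simp [emb, PiLp.inner_apply, Fintype.sum_sum_type, dotProduct, RCLike.inner_apply, mul_comm]

lemma emb_smul {r : ℕ} (c : ℝ) (u v : Fin r → ℝ) :
    c • emb u v = emb (c • u) (c • v) := by
  rw [emb, emb, ← WithLp.toLp_smul]
  congr 1
  funext i
  cases i <;> rfl

lemma emb_inj {r : ℕ} {u v u' v' : Fin r → ℝ} (h : emb u v = emb u' v') :
    u = u' ∧ v = v' := by
  have h2 : Sum.elim u v = Sum.elim u' v' := (WithLp.equiv 2 _).symm.injective h
  constructor <;> funext i
  · exact congrFun h2 (Sum.inl i)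
  · exact congrFun h2 (Sum.inr i)

section Mat
variable {n r : ℕ} (hn : 0 < n) (Ψ : Matrix (Fin n) (Fin r) ℝ)
  (horth : (1 / (n : ℝ)) • (Ψᵀ * Ψ) = 1)

include hn horth in
lemma gram_eq : Ψᵀ * Ψ = (n : ℝ) • 1 := by
  have hne : (n : ℝ) ≠ 0 := Nat.cast_ne_zero.mpr hn.ne'
  have := congrArg (fun M => (n : ℝ) • M) horth
  simpa [smul_smul, hne, mul_one_div_cancel] using this

include hn horth in
lemma dot_mulVec_self (u : Fin r → ℝ) :
    Ψ.mulVec u ⬝ᵥ Ψ.mulVec u = (n : ℝ) * (u ⬝ᵥ u) := by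
  rw [dotProduct_mulVec, ← mulVec_transpose, mulVec_mulVec, gram_eq hn Ψ horth,
    smul_mulVec, one_mulVec, smul_dotProduct, smul_eq_mul]

include hn horth in
lemma sqNorm_mulVec (u : Fin r → ℝ) :
    sqNorm (Ψ.mulVec u) = (n : ℝ) * sqNorm u := by
  rw [sqNorm_eq_dot, sqNorm_eq_dot, dot_mulVec_self hn Ψ horth]

include hn horth in
lemma ls_fit (rr : Fin n → ℝ) :
    Ψᵀ.mulVec rr = (n : ℝ) • ((Ψᵀ * Ψ)⁻¹.mulVec (Ψᵀ.mulVec rr)) := by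
  have hne : (n : ℝ) ≠ 0 := Nat.cast_ne_zero.mpr hn.ne'
  have hinv : (Ψᵀ * Ψ)⁻¹ = ((n : ℝ)⁻¹ • 1 : Matrix (Fin r) (Fin r) ℝ) := by
    rw [gram_eq hn Ψ horth]
    apply Matrix.inv_eq_right_inv
    rw [Matrix.smul_mul, Matrix.mul_smul, one_mul, smul_smul, mul_inv_cancel₀ hne, one_smul]
  rw [hinv, smul_mulVec, one_mulVec, smul_smul, mul_inv_cancel₀ hne, one_smul]

include hn horth in
lemma dot_residual (rr : Fin n → ℝ) (u : Fin r → ℝ) :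
    rr ⬝ᵥ Ψ.mulVec u = (n : ℝ) * (((Ψᵀ * Ψ)⁻¹.mulVec (Ψᵀ.mulVec rr)) ⬝ᵥ u) := by
  rw [dotProduct_mulVec, ← mulVec_transpose]
  conv_lhs => rw [ls_fit hn Ψ horth]
  rw [smul_dotProduct, smul_eq_mul]

end Mat


lemma decomp (n r d : ℕ) (lam : ℝ)
    (x : Fin d → Fin n → ℝ)
    (Ψ : Fin d → Fin d → Matrix (Fin n) (Fin r) ℝ)
    (β : Fin d → Fin d → Fin r → ℝ) (j k : Fin d) (hjk : j ≠ k)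
    (rjk rkj : Fin n → ℝ)
    (hrjk : rjk = fun i =>
      x j i - ∑ l ∈ Finset.univ.filter (fun l => l ≠ j ∧ l ≠ k),
        (Ψ j l).mulVec (β j l) i)
    (hrkj : rkj = fun i =>
      x k i - ∑ l ∈ Finset.univ.filter (fun l => l ≠ k ∧ l ≠ j),
        (Ψ k l).mulVec (β k l) i) :
    ∃ C : ℝ, ∀ u v : Fin r → ℝ,
      spaceJamObj n r d lam x Ψ (updPair β j k u v)
        = C + (1 / (2 * (n : ℝ))) *
            (sqNorm (fun i => rjk i - (Ψ j k).mulVec u i)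
              + sqNorm (fun i => rkj i - (Ψ k j).mulVec v i))
          + lam * Real.sqrt (sqNorm ((Ψ j k).mulVec u) + sqNorm ((Ψ k j).mulVec v)) := by
  set q : Fin d × Fin d := if j < k then (j, k) else (k, j) with hqdef
  refine ⟨(1 / (2 * (n : ℝ))) * ∑ a ∈ Finset.univ \ {j, k}, sqNorm (fun i =>
      x a i - ∑ l ∈ Finset.univ.filter (fun l => l ≠ a), (Ψ a l).mulVec (β a l) i)
    + lam * ∑ p ∈ (Finset.univ.filter (fun p : Fin d × Fin d => p.1 < p.2)).erase q,
      Real.sqrt (sqNorm ((Ψ p.1 p.2).mulVec (β p.1 p.2))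
        + sqNorm ((Ψ p.2 p.1).mulVec (β p.2 p.1))), ?_⟩
  intro u v
  rw [spaceJamObj]
  -- split the fit sum
  have hsub : ({j, k} : Finset (Fin d)) ⊆ Finset.univ := Finset.subset_univ _
  rw [← Finset.sum_sdiff hsub]
  have hjnotk : j ∉ ({k} : Finset (Fin d)) := by simp [hjk]
  rw [show ({j, k} : Finset (Fin d)) = insert j {k} from rfl, Finset.sum_insert hjnotk,
    Finset.sum_singleton]
  -- the sdiff part doesn't depend on u, v
  have hA : ∑ a ∈ Finset.univ \ {j, k}, sqNorm (fun i =>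
        x a i - ∑ l ∈ Finset.univ.filter (fun l => l ≠ a),
          (Ψ a l).mulVec (updPair β j k u v a l) i)
      = ∑ a ∈ Finset.univ \ {j, k}, sqNorm (fun i =>
        x a i - ∑ l ∈ Finset.univ.filter (fun l => l ≠ a), (Ψ a l).mulVec (β a l) i) := by
    refine Finset.sum_congr rfl fun a ha => ?_
    have haj : a ≠ j := by simp at ha; tauto
    have hak : a ≠ k := by simp at ha; tauto
    simp [updPair, haj, hak]
  -- the j-term
  have hfilj : Finset.univ.filter (fun l => l ≠ j)
      = insert k (Finset.univ.filter fun l => l ≠ j ∧ l ≠ k) := by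
    ext l
    simp only [Finset.mem_filter, Finset.mem_univ, true_and, Finset.mem_insert]
    constructor
    · intro hl
      by_cases hlk : l = k
      · exact Or.inl hlk
      · exact Or.inr ⟨hl, hlk⟩
    · rintro (rfl | ⟨h1, _⟩)
      · exact hjk.symm
      · exact h1
  have hknot : k ∉ Finset.univ.filter fun l => l ≠ j ∧ l ≠ k := by simp
  have hJ : sqNorm (fun i =>
        x j i - ∑ l ∈ Finset.univ.filter (fun l => l ≠ j),
          (Ψ j l).mulVec (updPair β j k u v j l) i)
      = sqNorm (fun i => rjk i - (Ψ j k).mulVec u i) := by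
    congr 1
    funext i
    rw [hfilj, Finset.sum_insert hknot]
    have h1 : updPair β j k u v j k = u := by simp [updPair]
    have h2 : ∑ l ∈ Finset.univ.filter (fun l => l ≠ j ∧ l ≠ k),
        (Ψ j l).mulVec (updPair β j k u v j l) i
        = ∑ l ∈ Finset.univ.filter (fun l => l ≠ j ∧ l ≠ k),
        (Ψ j l).mulVec (β j l) i := by
      refine Finset.sum_congr rfl fun l hl => ?_
      simp only [Finset.mem_filter] at hl
      simp [updPair, hl.2.2, hjk]
    rw [h1, h2, hrjk]
    ring
  -- the k-term
  have hfilk : Finset.univ.filter (fun l => l ≠ k)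
      = insert j (Finset.univ.filter fun l => l ≠ k ∧ l ≠ j) := by
    ext l
    simp only [Finset.mem_filter, Finset.mem_univ, true_and, Finset.mem_insert]
    constructor
    · intro hl
      by_cases hlj : l = j
      · exact Or.inl hlj
      · exact Or.inr ⟨hl, hlj⟩
    · rintro (rfl | ⟨h1, _⟩)
      · exact hjk
      · exact h1
  have hjnot : j ∉ Finset.univ.filter fun l => l ≠ k ∧ l ≠ j := by simp
  have hK : sqNorm (fun i =>
        x k i - ∑ l ∈ Finset.univ.filter (fun l => l ≠ k),
          (Ψ k l).mulVec (updPair β j k u v k l) i)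
      = sqNorm (fun i => rkj i - (Ψ k j).mulVec v i) := by
    congr 1
    funext i
    rw [hfilk, Finset.sum_insert hjnot]
    have h1 : updPair β j k u v k j = v := by simp [updPair, hjk.symm, hjk]
    have h2 : ∑ l ∈ Finset.univ.filter (fun l => l ≠ k ∧ l ≠ j),
        (Ψ k l).mulVec (updPair β j k u v k l) i
        = ∑ l ∈ Finset.univ.filter (fun l => l ≠ k ∧ l ≠ j),
        (Ψ k l).mulVec (β k l) i := by
      refine Finset.sum_congr rfl fun l hl => ?_
      simp only [Finset.mem_filter] at hl
      simp [updPair, hl.2.1, hl.2.2, hjk.symm]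
    rw [h1, h2, hrkj]
    ring
  -- split the penalty sum
  have hq : q ∈ Finset.univ.filter (fun p : Fin d × Fin d => p.1 < p.2) := by
    rcases lt_or_gt_of_ne hjk with h | h
    · simp [hqdef, if_pos h, h]
    · simp [hqdef, if_neg (asymm h), h]
  rw [← Finset.add_sum_erase _ _ hq]
  -- the q-term
  have hQ : Real.sqrt (sqNorm ((Ψ q.1 q.2).mulVec (updPair β j k u v q.1 q.2))
        + sqNorm ((Ψ q.2 q.1).mulVec (updPair β j k u v q.2 q.1)))
      = Real.sqrt (sqNorm ((Ψ j k).mulVec u) + sqNorm ((Ψ k j).mulVec v)) := by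
    have h1 : updPair β j k u v j k = u := by simp [updPair]
    have h2 : updPair β j k u v k j = v := by simp [updPair, hjk.symm, hjk]
    rcases lt_or_gt_of_ne hjk with h | h
    · rw [hqdef, if_pos h]; rw [h1, h2]
    · rw [hqdef, if_neg (asymm h)]; rw [h1, h2, add_comm]
  -- the erased part doesn't depend on u, v
  have hE : ∑ p ∈ (Finset.univ.filter (fun p : Fin d × Fin d => p.1 < p.2)).erase q,
        Real.sqrt (sqNorm ((Ψ p.1 p.2).mulVec (updPair β j k u v p.1 p.2))
          + sqNorm ((Ψ p.2 p.1).mulVec (updPair β j k u v p.2 p.1)))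
      = ∑ p ∈ (Finset.univ.filter (fun p : Fin d × Fin d => p.1 < p.2)).erase q,
        Real.sqrt (sqNorm ((Ψ p.1 p.2).mulVec (β p.1 p.2))
          + sqNorm ((Ψ p.2 p.1).mulVec (β p.2 p.1))) := by
    refine Finset.sum_congr rfl fun p hp => ?_
    rw [Finset.mem_erase, Finset.mem_filter] at hp
    obtain ⟨hpq, -, hplt⟩ := hp
    have c1 : ¬(p.1 = j ∧ p.2 = k) := by
      rintro ⟨e1, e2⟩
      apply hpq
      have : p = (j, k) := Prod.ext e1 e2
      rw [this, hqdef, if_pos (by rw [← e1, ← e2]; exact hplt)]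
    have c2 : ¬(p.1 = k ∧ p.2 = j) := by
      rintro ⟨e1, e2⟩
      apply hpq
      have hkj : k < j := by rw [← e1, ← e2]; exact hplt
      have : p = (k, j) := Prod.ext e1 e2
      rw [this, hqdef, if_neg (asymm hkj)]
    have c3 : ¬(p.2 = j ∧ p.1 = k) := fun ⟨e1, e2⟩ => c2 ⟨e2, e1⟩
    have c4 : ¬(p.2 = k ∧ p.1 = j) := fun ⟨e1, e2⟩ => c1 ⟨e2, e1⟩
    have e1 : updPair β j k u v p.1 p.2 = β p.1 p.2 := by
      simp only [updPair]
      rw [if_neg c1, if_neg c2]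
    have e2 : updPair β j k u v p.2 p.1 = β p.2 p.1 := by
      simp only [updPair]
      rw [if_neg c4, if_neg c3]
    rw [e1, e2]
  rw [hA, hJ, hK, hQ, hE]
  ring


/-- **Group soft-thresholding is the exact block-coordinate update.**
Fix all blocks except (β_{jk}, β_{kj}).  With partial residuals r_{jk}, r_{kj},
least-squares fits b_{jk} = (Ψ_{jk}ᵀΨ_{jk})⁻¹Ψ_{jk}ᵀr_{jk},
b_{kj} = (Ψ_{kj}ᵀΨ_{kj})⁻¹Ψ_{kj}ᵀr_{kj}: if (b_{jk},b_{kj}) ≠ (0,0) the unique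
minimizer of F over the pair of blocks is
(1 − nλ/(‖Ψ_{jk}b_{jk}‖₂² + ‖Ψ_{kj}b_{kj}‖₂²)^{1/2})₊ · (b_{jk}, b_{kj});
if (b_{jk},b_{kj}) = (0,0), the unique minimizer is (0,0). -/
theorem spaceJam_block_update
    (n r d : ℕ) (hn : 0 < n) (lam : ℝ) (hlam : 0 < lam)
    (x : Fin d → Fin n → ℝ)
    (Ψ : Fin d → Fin d → Matrix (Fin n) (Fin r) ℝ)
    (horth : ∀ a b : Fin d, a ≠ b → (1 / (n : ℝ)) • ((Ψ a b)ᵀ * Ψ a b) = 1)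
    (β : Fin d → Fin d → Fin r → ℝ) (j k : Fin d) (hjk : j ≠ k)
    (rjk rkj : Fin n → ℝ)
    (hrjk : rjk = fun i =>
      x j i - ∑ l ∈ Finset.univ.filter (fun l => l ≠ j ∧ l ≠ k),
        (Ψ j l).mulVec (β j l) i)
    (hrkj : rkj = fun i =>
      x k i - ∑ l ∈ Finset.univ.filter (fun l => l ≠ k ∧ l ≠ j),
        (Ψ k l).mulVec (β k l) i)
    (bjk bkj : Fin r → ℝ)
    (hbjk : bjk = (((Ψ j k)ᵀ * Ψ j k)⁻¹).mulVec ((Ψ j k)ᵀ.mulVec rjk))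
    (hbkj : bkj = (((Ψ k j)ᵀ * Ψ k j)⁻¹).mulVec ((Ψ k j)ᵀ.mulVec rkj))
    (c : ℝ)
    (hc : c = max (1 - (n : ℝ) * lam / Real.sqrt (sqNorm ((Ψ j k).mulVec bjk)
        + sqNorm ((Ψ k j).mulVec bkj))) 0) :
    ((¬(bjk = 0 ∧ bkj = 0)) →
      (∀ u v : Fin r → ℝ,
          spaceJamObj n r d lam x Ψ (updPair β j k (c • bjk) (c • bkj))
            ≤ spaceJamObj n r d lam x Ψ (updPair β j k u v))
      ∧ ∀ u v : Fin r → ℝ,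
          spaceJamObj n r d lam x Ψ (updPair β j k u v)
            ≤ spaceJamObj n r d lam x Ψ (updPair β j k (c • bjk) (c • bkj)) →
          u = c • bjk ∧ v = c • bkj)
    ∧ ((bjk = 0 ∧ bkj = 0) →
      (∀ u v : Fin r → ℝ,
          spaceJamObj n r d lam x Ψ (updPair β j k 0 0)
            ≤ spaceJamObj n r d lam x Ψ (updPair β j k u v))
      ∧ ∀ u v : Fin r → ℝ,
          spaceJamObj n r d lam x Ψ (updPair β j k u v)
            ≤ spaceJamObj n r d lam x Ψ (updPair β j k 0 0) →
          u = 0 ∧ v = 0) := by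
  
  classical
  have hnR : (0:ℝ) < n := Nat.cast_pos.mpr hn
  have horthjk : (1 / (n : ℝ)) • ((Ψ j k)ᵀ * Ψ j k) = 1 := horth j k hjk
  have horthkj : (1 / (n : ℝ)) • ((Ψ k j)ᵀ * Ψ k j) = 1 := horth k j hjk.symm
  obtain ⟨C, hC⟩ := decomp n r d lam x Ψ β j k hjk rjk rkj hrjk hrkj
  set μ : ℝ := Real.sqrt n * lam with hμdef
  have hμpos : 0 < μ := mul_pos (Real.sqrt_pos.mpr hnR) hlam
  have hsq : ∀ u v : Fin r → ℝ,
      lam * Real.sqrt (sqNorm ((Ψ j k).mulVec u) + sqNorm ((Ψ k j).mulVec v))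
        = μ * ‖emb u v‖ := by
    intro u v
    rw [sqNorm_mulVec hn _ horthjk, sqNorm_mulVec hn _ horthkj, ← mul_add,
      Real.sqrt_mul (le_of_lt hnR), emb_norm]
    ring
  have hquad : ∀ u v : Fin r → ℝ,
      (1 / (2 * (n : ℝ))) * (sqNorm (fun i => rjk i - (Ψ j k).mulVec u i)
        + sqNorm (fun i => rkj i - (Ψ k j).mulVec v i))
      = (1 / (2 * (n : ℝ))) * (sqNorm rjk + sqNorm rkj)
        + ((1/2) * ‖emb u v‖^2 - ⟪emb bjk bkj, emb u v⟫) := by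
    intro u v
    rw [sqNorm_sub, sqNorm_sub, dot_residual hn _ horthjk, dot_residual hn _ horthkj,
      ← hbjk, ← hbkj, sqNorm_mulVec hn _ horthjk, sqNorm_mulVec hn _ horthkj,
      emb_normsq, emb_inner]
    field_simp
    ring
  have hΦ : ∀ u v : Fin r → ℝ,
      spaceJamObj n r d lam x Ψ (updPair β j k u v)
        = (C + (1 / (2 * (n : ℝ))) * (sqNorm rjk + sqNorm rkj))
          + ((1/2) * ‖emb u v‖^2 - ⟪emb bjk bkj, emb u v⟫ + μ * ‖emb u v‖) := by
    intro u v
    rw [hC u v, hquad u v, hsq u v]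
    ring
  have hcc : c = max (1 - μ / ‖emb bjk bkj‖) 0 := by
    rw [hc]
    congr 2
    rw [sqNorm_mulVec hn _ horthjk, sqNorm_mulVec hn _ horthkj, ← mul_add,
      Real.sqrt_mul (le_of_lt hnR), ← emb_norm]
    rcases eq_or_ne ‖emb bjk bkj‖ 0 with hB | hB
    · rw [hB, mul_zero, div_zero, div_zero]
    · have hss : Real.sqrt (n:ℝ) * Real.sqrt (n:ℝ) = (n:ℝ) := Real.mul_self_sqrt hnR.le
      have hs0 : Real.sqrt (n:ℝ) ≠ 0 := by positivity
      rw [hμdef]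
      field_simp
      linear_combination (-1 : ℝ) * hss
  have hmain1 : ∀ u v : Fin r → ℝ,
      spaceJamObj n r d lam x Ψ (updPair β j k (c • bjk) (c • bkj))
        ≤ spaceJamObj n r d lam x Ψ (updPair β j k u v) := by
    intro u v
    rw [hΦ, hΦ]
    apply add_le_add_right
    rw [← emb_smul]
    exact (sj_key (emb bjk bkj) μ c hμpos hcc (emb u v)).1
  have hmain2 : ∀ u v : Fin r → ℝ,
      spaceJamObj n r d lam x Ψ (updPair β j k u v)
        ≤ spaceJamObj n r d lam x Ψ (updPair β j k (c • bjk) (c • bkj)) →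
      u = c • bjk ∧ v = c • bkj := by
    intro u v h
    rw [hΦ, hΦ] at h
    have h' := le_of_add_le_add_left h
    rw [← emb_smul] at h'
    have heq := (sj_key (emb bjk bkj) μ c hμpos hcc (emb u v)).2 h'
    rw [emb_smul] at heq
    exact emb_inj heq
  constructor
  · intro _
    exact ⟨hmain1, hmain2⟩
  · rintro ⟨h1, h2⟩
    constructor
    · intro u v
      have := hmain1 u v
      rw [h1, h2] at this
      simpa only [smul_zero] using this
    · intro u v hle
      have := hmain2 u v (by rw [h1, h2]; simpa only [smul_zero] using hle)
      rw [h1, h2] at this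
      simpa only [smul_zero] using this
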